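/- Let q ≡ ±1 (mod 12) be an odd prime power, n=(q+1)/2, and s ∈ {1/2, -1/2} ⊂ F_q. Then every monic irreducible factor of g_s(y)=y^n+(1-y)^n-s over F_q has the form y^3 - (3/2)y^2 + (9/16)y - m for some m ∈ F_q. -/

import Mathlib

open Polynomial

lemma core_no_quad {L : Type*} [Field L] (q n : ℕ) (h2n : 2 * n = q + 1)
    (hq : q % 12 = 1 ∨ q % 12 = 11)
    (hpow : ∀ x y : L, (x + y) ^ q = x ^ q + y ^ q)
    (hsq : ∀ x : L, ∃ y : L, y ^ 2 = x)
    (h3 : (3 : L) ≠ 0)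
    (s β : L) (hsf : s ^ q = s) (hs1 : (2 * s) ^ 2 = 1)
    (hβq : (β ^ q) ^ q = β) (heq : β ^ n + (1 - β) ^ n = s) : False := by
  have hsub : ∀ x y : L, (x - y) ^ q = x ^ q - y ^ q := by
    intro x y
    have h := hpow (x - y) y
    rw [sub_add_cancel] at h
    linear_combination -h
  have h2 : (2 : L) ≠ 0 := by
    intro h
    rw [h] at hs1; simp at hs1
  have hs0 : s ≠ 0 := by
    intro h
    rw [h] at hs1; simp at hs1
  have hn0 : n ≠ 0 := by omega
  have hseq1 : s ≠ 1 := by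
    intro h
    rw [h] at hs1
    exact h3 (by linear_combination hs1)
  have hβ0 : β ≠ 0 := by
    intro h
    rw [h] at heq
    simp [zero_pow hn0] at heq
    exact hseq1 heq.symm
  have hβ1 : β ≠ 1 := by
    intro h
    rw [h] at heq
    simp [zero_pow hn0] at heq
    exact hseq1 heq.symm
  have h1β : (1 : L) - β ≠ 0 := sub_ne_zero.mpr (Ne.symm hβ1)
  set A := β ^ n with hA
  set B := (1 - β) ^ n with hB
  have hA0 : A ≠ 0 := pow_ne_zero _ hβ0
  have hB0 : B ≠ 0 := pow_ne_zero _ h1β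
  have hA2 : A ^ 2 = β ^ (q + 1) := by rw [hA, ← pow_mul, mul_comm n 2, h2n]
  have hB2 : B ^ 2 = (1 - β) ^ (q + 1) := by rw [hB, ← pow_mul, mul_comm n 2, h2n]
  have h1βq : ((1 - β) ^ q) ^ q = 1 - β := by rw [hsub, one_pow, hsub, one_pow, hβq]
  have hABq : A ^ q + B ^ q = s := by rw [← hpow, heq, hsf]
  have hAq2 : (A ^ q) ^ 2 = A ^ 2 := by
    have h1 : (A ^ q) ^ 2 = (β ^ q) ^ q * β ^ q := by
      rw [pow_right_comm, hA2, pow_right_comm, pow_succ]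
    rw [h1, hβq, hA2, pow_succ]; ring
  have hBq2 : (B ^ q) ^ 2 = B ^ 2 := by
    have h1 : (B ^ q) ^ 2 = ((1 - β) ^ q) ^ q * (1 - β) ^ q := by
      rw [pow_right_comm, hB2, pow_right_comm, pow_succ]
    rw [h1, h1βq, hB2, pow_succ]; ring
  have hAq : A ^ q = A := by
    have hfac : (A ^ q - A) * (A ^ q + A) = 0 := by linear_combination hAq2
    rcases mul_eq_zero.mp hfac with h | h
    · linear_combination h
    · exfalso
      have hAqv : A ^ q = -A := by linear_combination h
      have hBv : B = s - A := by linear_combination heq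
      have hBqv : B ^ q = s + A := by linear_combination hABq - hAqv
      have h4 : (2 * 2 * s) * A = 0 := by
        have h5 := hBq2
        rw [hBqv, hBv] at h5
        linear_combination h5
      exact hA0 ((mul_eq_zero.mp h4).resolve_left
        (mul_ne_zero (mul_ne_zero h2 h2) hs0))
  have hBq : B ^ q = B := by linear_combination hABq - hAq - heq
  obtain ⟨i, hi⟩ := hsq (-1)
  obtain ⟨ξ, hξ⟩ := hsq β
  obtain ⟨η, hη⟩ := hsq (1 - β)
  have hξ0 : ξ ≠ 0 := by
    intro h; rw [h] at hξ; exact hβ0 (by simpa using hξ.symm)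
  have hη0 : η ≠ 0 := by
    intro h; rw [h] at hη; exact h1β (by simpa using hη.symm)
  have hξq1 : ξ ^ q * ξ = A := by
    rw [← pow_succ, ← h2n, pow_mul, hξ]
  have hηq1 : η ^ q * η = B := by
    rw [← pow_succ, ← h2n, pow_mul, hη]
  have hξqq : (ξ ^ q) ^ q = ξ := by
    have h1 : (ξ ^ q) ^ q * ξ ^ q = A := by rw [← mul_pow, hξq1, hAq]
    have h2' : (ξ ^ q) ^ q * ξ ^ q = ξ * ξ ^ q := by rw [h1, ← hξq1]; ring
    exact mul_right_cancel₀ (pow_ne_zero _ hξ0) h2'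
  have hηqq : (η ^ q) ^ q = η := by
    have h1 : (η ^ q) ^ q * η ^ q = B := by rw [← mul_pow, hηq1, hBq]
    have h2' : (η ^ q) ^ q * η ^ q = η * η ^ q := by rw [h1, ← hηq1]; ring
    exact mul_right_cancel₀ (pow_ne_zero _ hη0) h2'
  obtain ⟨k, hk⟩ : ∃ k, q = 2 * k + 1 := ⟨q / 2, by omega⟩
  have hiq : i ^ q = (-1) ^ k * i := by rw [hk, pow_succ, pow_mul, hi]
  set u := ξ + i * η with hu
  set v := ξ - i * η with hv
  have huv : u * v = 1 := by
    rw [hu, hv]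
    linear_combination hξ + hη - η ^ 2 * hi
  have haux1 : (ξ ^ q) ^ 2 = β ^ q := by rw [pow_right_comm, hξ]
  have haux2 : (η ^ q) ^ 2 = 1 - β ^ q := by rw [pow_right_comm, hη, hsub, one_pow]
  rcases hq with hq1 | hq2
  · -- q % 12 = 1
    have hkeven : (-1 : L) ^ k = 1 := Even.neg_one_pow ⟨k / 2, by omega⟩
    have hiq1 : i ^ q = i := by rw [hiq, hkeven, one_mul]
    set w := (ξ ^ q + i * η ^ q) * v with hw
    set w' := (ξ ^ q - i * η ^ q) * u with hw'
    have hww' : w * w' = 1 := by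
      rw [hw, hw']
      linear_combination ((ξ ^ q) ^ 2 - i ^ 2 * (η ^ q) ^ 2) * huv + haux1 + haux2
        - (η ^ q) ^ 2 * hi
    have hsum : w + w' = 2 * s := by
      rw [hw, hw', hu, hv]
      linear_combination 2 * hξq1 - 2 * (η ^ q * η) * hi + 2 * hηq1 + 2 * heq
    have hwq : w ^ q = w' := by
      calc w ^ q = ((ξ ^ q + i * η ^ q) * v) ^ q := by rw [hw]
        _ = (ξ ^ q + i * η ^ q) ^ q * v ^ q := mul_pow _ _ _
        _ = ((ξ ^ q) ^ q + (i * η ^ q) ^ q) * (ξ ^ q - (i * η) ^ q) := by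
              rw [hpow, hv, hsub]
        _ = (ξ + i * η) * (ξ ^ q - i * η ^ q) := by
              rw [mul_pow, mul_pow, hiq1, hξqq, hηqq]
        _ = w' := by rw [hw', hu]; ring
    have hquad : w ^ 2 = 2 * s * w - 1 := by linear_combination w * hsum - hww'
    have hw3 : w ^ 3 = -(2 * s) := by linear_combination (w + 2 * s) * hquad + w * hs1
    have hw6 : w ^ 6 = 1 := by linear_combination (w ^ 3 - 2 * s) * hw3 + hs1
    obtain ⟨m, hm⟩ : ∃ m, q = 12 * m + 1 := ⟨q / 12, by omega⟩
    have hwqw : w ^ q = w := by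
      rw [hm, pow_succ, show 12 * m = 6 * (2 * m) by ring, pow_mul, hw6, one_pow, one_mul]
    have hw'w : w' = w := by rw [← hwq, hwqw]
    have hws : w = s := by
      have h2w : 2 * w = 2 * s := by
        rw [hw'w] at hsum
        linear_combination hsum
      exact mul_left_cancel₀ h2 h2w
    have hw's : w' = s := by rw [hw'w, hws]
    have hss : s ^ 2 = 1 := by linear_combination hww' - s * hw's - w' * hws
    exact h3 (by linear_combination hs1 - 4 * hss)
  · -- q % 12 = 11
    have hkodd : (-1 : L) ^ k = -1 := Odd.neg_one_pow ⟨k / 2, by omega⟩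
    have hiq2 : i ^ q = -i := by rw [hiq, hkodd]; ring
    set w := (ξ ^ q - i * η ^ q) * u with hw
    set w' := (ξ ^ q + i * η ^ q) * v with hw'
    have hww' : w * w' = 1 := by
      rw [hw, hw']
      linear_combination ((ξ ^ q) ^ 2 - i ^ 2 * (η ^ q) ^ 2) * huv + haux1 + haux2
        - (η ^ q) ^ 2 * hi
    have hsum : w + w' = 2 * s := by
      rw [hw, hw', hu, hv]
      linear_combination 2 * hξq1 - 2 * (η ^ q * η) * hi + 2 * hηq1 + 2 * heq
    have hwq : w ^ q = w := by
      calc w ^ q = ((ξ ^ q - i * η ^ q) * u) ^ q := by rw [hw]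
        _ = (ξ ^ q - i * η ^ q) ^ q * u ^ q := mul_pow _ _ _
        _ = ((ξ ^ q) ^ q - (i * η ^ q) ^ q) * (ξ ^ q + (i * η) ^ q) := by
              rw [hsub, hu, hpow]
        _ = (ξ - (-i) * η) * (ξ ^ q + (-i) * η ^ q) := by
              rw [mul_pow, mul_pow, hiq2, hξqq, hηqq]
        _ = w := by rw [hw, hu]; ring
    have hquad : w ^ 2 = 2 * s * w - 1 := by linear_combination w * hsum - hww'
    have hw3 : w ^ 3 = -(2 * s) := by linear_combination (w + 2 * s) * hquad + w * hs1
    have hw6 : w ^ 6 = 1 := by linear_combination (w ^ 3 - 2 * s) * hw3 + hs1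
    obtain ⟨m, hm⟩ : ∃ m, q = 12 * m + 11 := ⟨q / 12, by omega⟩
    have hw5 : w ^ 5 = w := by
      have hqe : w ^ q = w ^ 5 := by
        rw [hm, show 12 * m + 11 = 6 * (2 * m + 1) + 5 by ring, pow_add, pow_mul, hw6,
          one_pow, one_mul]
      rw [← hqe, hwq]
    have hws : w = s := by
      have h2w : 2 * w = 2 * s := by
        linear_combination w ^ 2 * hw3 - hw5 - 2 * s * hquad - w * hs1
      exact mul_left_cancel₀ h2 h2w
    have hw's : w' = s := by linear_combination hsum - hws
    have hss : s ^ 2 = 1 := by linear_combination hww' - s * hw's - w' * hws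
    exact h3 (by linear_combination hs1 - 4 * hss)

lemma exists_algebraMap_of_pow_card {F K : Type*} [Field F] [Fintype F] [Field K]
    [Algebra F K] (x : K) (hx : x ^ (Fintype.card F) = x) :
    ∃ a : F, algebraMap F K a = x := by
  by_contra hcon
  push_neg at hcon
  classical
  set q := Fintype.card F with hq
  have hq1 : 1 < q := Fintype.one_lt_card
  set p : K[X] := X ^ q - X with hp
  have hp0 : p ≠ 0 := FiniteField.X_pow_card_sub_X_ne_zero K hq1
  set S : Finset K := Finset.univ.image (algebraMap F K) with hS
  have hSsub : S ⊆ p.roots.toFinset := by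
    intro y hy
    rw [hS, Finset.mem_image] at hy
    obtain ⟨a, _, rfl⟩ := hy
    rw [Multiset.mem_toFinset, mem_roots hp0]
    simp only [hp, IsRoot.def, eval_sub, eval_pow, eval_X]
    rw [← map_pow, FiniteField.pow_card, sub_self]
  have hxT : x ∈ p.roots.toFinset := by
    rw [Multiset.mem_toFinset, mem_roots hp0]
    simp only [hp, IsRoot.def, eval_sub, eval_pow, eval_X]
    rw [hx, sub_self]
  have hxS : x ∉ S := by
    intro hmem
    rw [hS, Finset.mem_image] at hmem
    obtain ⟨a, _, ha⟩ := hmem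
    exact hcon a ha
  have hcard1 : q + 1 ≤ (insert x S).card := by
    rw [Finset.card_insert_of_notMem hxS]
    have : S.card = q := by
      rw [hS, Finset.card_image_of_injective _ (algebraMap F K).injective,
        Finset.card_univ]
    omega
  have hsub2 : insert x S ⊆ p.roots.toFinset := Finset.insert_subset hxT hSsub
  have hcard2 : (p.roots.toFinset).card ≤ q := by
    calc (p.roots.toFinset).card ≤ Multiset.card p.roots := p.roots.toFinset_card_le
      _ ≤ p.natDegree := p.card_roots'
      _ = q := FiniteField.X_pow_card_sub_X_natDegree_eq K hq1
  have := Finset.card_le_card hsub2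
  omega

theorem stmt15 (F : Type*) [Field F] [Fintype F] (hodd : Odd (Fintype.card F))
    (hq : Fintype.card F % 12 = 1 ∨ Fintype.card F % 12 = 11)
    (n : ℕ) (hn : n = (Fintype.card F + 1) / 2)
    (s : F) (hs : s = 1 / 2 ∨ s = -(1 / 2)) :
    ∀ h : F[X], h.Monic → Irreducible h → h ∣ (X ^ n + (1 - X) ^ n - C s) →
      ∃ m : F, h = X ^ 3 - C (3 / 2) * X ^ 2 + C (9 / 16) * X - C m := by
  intro h hmon hirr hdvd
  classical
  set q := Fintype.card F with hqcard
  have hq1 : 1 < q := Fintype.one_lt_card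
  have h2n : 2 * n = q + 1 := by
    obtain ⟨k, hk⟩ := hodd; omega
  have hn0 : n ≠ 0 := by omega
  haveI : CharP F (ringChar F) := ringChar.charP F
  obtain ⟨f, hpprime, hcard⟩ := FiniteField.card F (ringChar F)
  have h3F : (3 : F) ≠ 0 := by
    intro hc
    have hc' : ((3 : ℕ) : F) = 0 := by exact_mod_cast hc
    have hdv : ringChar F ∣ 3 := ringChar.dvd hc'
    have hp3 : ringChar F = 3 := (Nat.prime_dvd_prime_iff_eq hpprime Nat.prime_three).mp hdv
    have h3q : 3 ∣ q := by
      rw [hqcard, hcard, hp3]; exact dvd_pow_self 3 f.pos.ne'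
    omega
  have h2F : (2 : F) ≠ 0 := by
    intro hc
    have hc' : ((2 : ℕ) : F) = 0 := by exact_mod_cast hc
    have hdv : ringChar F ∣ 2 := ringChar.dvd hc'
    have hp2 : ringChar F = 2 := (Nat.prime_dvd_prime_iff_eq hpprime Nat.prime_two).mp hdv
    have h2q : 2 ∣ q := by
      rw [hqcard, hcard, hp2]; exact dvd_pow_self 2 f.pos.ne'
    omega
  have hs1F : (2 * s) ^ 2 = 1 := by
    rcases hs with h' | h' <;> subst h' <;> field_simp
  -- the field K
  haveI hFact : Fact (Irreducible h) := ⟨hirr⟩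
  set K := AdjoinRoot h with hKdef
  set α : K := AdjoinRoot.root h with hαdef
  set sK : K := algebraMap F K s with hsKdef
  have hinj : Function.Injective (algebraMap F K) := (algebraMap F K).injective
  have hα : α ^ n + (1 - α) ^ n = sK := by
    have h0 : aeval α (X ^ n + (1 - X) ^ n - C s) = 0 := by
      rw [hαdef, AdjoinRoot.aeval_eq, AdjoinRoot.mk_eq_zero]; exact hdvd
    simp only [map_add, map_sub, map_pow, map_one, aeval_X, aeval_C] at h0
    rw [← hsKdef] at h0
    linear_combination h0
  -- Frobenius likes
  haveI : CharP K (ringChar F) := charP_of_injective_algebraMap hinj (ringChar F)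
  haveI : Fact (Nat.Prime (ringChar F)) := ⟨hpprime⟩
  have hpowK : ∀ x y : K, (x + y) ^ q = x ^ q + y ^ q := by
    intro x y
    have h' := map_add (iterateFrobenius K (ringChar F) (f : ℕ)) x y
    rw [iterateFrobenius_def, iterateFrobenius_def, iterateFrobenius_def, ← hcard] at h'
    exact h'
  have hsubK : ∀ x y : K, (x - y) ^ q = x ^ q - y ^ q := by
    intro x y
    have h' := hpowK (x - y) y
    rw [sub_add_cancel] at h'
    linear_combination -h'
  have hconstq : ∀ a : F, (algebraMap F K a) ^ q = algebraMap F K a := by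
    intro a; rw [← map_pow, FiniteField.pow_card]
  have h3K : (3 : K) ≠ 0 := by
    intro hc; apply h3F
    apply hinj
    rw [map_ofNat, map_zero]; exact hc
  have h2K : (2 : K) ≠ 0 := by
    intro hc; apply h2F
    apply hinj
    rw [map_ofNat, map_zero]; exact hc
  have hs1K : (2 * sK) ^ 2 = 1 := by
    have := congrArg (algebraMap F K) hs1F
    rw [map_pow, map_mul, map_ofNat, map_one] at this
    rw [hsKdef]; exact this
  have hsK1 : sK ≠ 1 := by
    intro hc
    rw [hc] at hs1K
    exact h3K (by linear_combination hs1K)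
  have hα0 : α ≠ 0 := by
    intro hc
    rw [hc] at hα
    simp [zero_pow hn0] at hα
    exact hsK1 hα.symm
  have hα1 : α ≠ 1 := by
    intro hc
    rw [hc] at hα
    simp [zero_pow hn0] at hα
    exact hsK1 hα.symm
  -- key quadratic
  set A : K := α ^ n with hA
  set B : K := (1 - α) ^ n with hB
  have hA2 : α ^ q * α = A ^ 2 := by
    rw [← pow_succ, ← h2n, mul_comm 2 n, pow_mul, hA, pow_right_comm]
  have hB2 : (1 - α) ^ q * (1 - α) = B ^ 2 := by
    rw [← pow_succ, ← h2n, mul_comm 2 n, pow_mul, hB, pow_right_comm]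
  have h1q : (1 - α) ^ q = 1 - α ^ q := by
    rw [hsubK, one_pow]
  have hE1 : A ^ 2 * (1 - α) + B ^ 2 * α = α * (1 - α) := by
    linear_combination (-(1 - α)) * hA2 - α * hB2 + α * (1 - α) * h1q
  have hBv : B = sK - A := by linear_combination hα
  have hKQ4 : 4 * A ^ 2 = 8 * sK * α * A - 4 * α ^ 2 + 3 * α := by
    rw [hBv] at hE1
    linear_combination 4 * hE1 - α * hs1K
  have hαqv : 4 * α ^ q = 8 * sK * A - 4 * α + 3 := by
    have hz : (4 * α ^ q - (8 * sK * A - 4 * α + 3)) * α = 0 := by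
      linear_combination 4 * hA2 + hKQ4
    rcases mul_eq_zero.mp hz with h' | h'
    · linear_combination h'
    · exact absurd h' hα0
  -- P(α) is Frobenius-fixed
  have h4Kq : (4 : K) ^ q = 4 := by
    have := hconstq 4; rwa [map_ofNat] at this
  have h3Kq : (3 : K) ^ q = 3 := by
    have := hconstq 3; rwa [map_ofNat] at this
  have hkey : (8 * sK * A - 4 * α + 3) * (8 * sK * A - 4 * α) ^ 2
      = 4 * α * (4 * α - 3) ^ 2 := by
    linear_combination (48 * sK ^ 2 + 128 * sK ^ 3 * A - 192 * α * sK ^ 2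
        + 256 * α * sK ^ 4) * hKQ4
      + (36 * α + 192 * α * sK * A - 144 * α ^ 2 - 384 * α ^ 2 * sK * A
        + 192 * α ^ 2 * sK ^ 2 + 512 * α ^ 2 * sK ^ 3 * A + 128 * α ^ 3
        - 256 * α ^ 3 * sK ^ 2) * hs1K
  have h64K : (64 : K) ≠ 0 := by
    have h' : (2 : K) ^ 6 ≠ 0 := pow_ne_zero _ h2K
    norm_num at h'
    exact h'
  have hRfix : (α * (4 * α - 3) ^ 2) ^ q = α * (4 * α - 3) ^ 2 := by
    have hRq : (α * (4 * α - 3) ^ 2) ^ q = α ^ q * (4 * α ^ q - 3) ^ 2 := by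
      rw [mul_pow, pow_right_comm, hsubK, mul_pow, h4Kq, h3Kq]
    rw [hRq]
    have h64 : (64 : K) * (α ^ q * (4 * α ^ q - 3) ^ 2)
        = (64 : K) * (α * (4 * α - 3) ^ 2) := by
      linear_combination (16 * ((4 * α ^ q) ^ 2 + (4 * α ^ q) * (8 * sK * A - 4 * α + 3)
          + (8 * sK * A - 4 * α + 3) ^ 2 - 6 * (4 * α ^ q + (8 * sK * A - 4 * α + 3)) + 9))
          * hαqv + 16 * hkey
    exact mul_left_cancel₀ h64K h64
  obtain ⟨m₁, hm₁⟩ := exists_algebraMap_of_pow_card (α * (4 * α - 3) ^ 2) hRfix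
  -- the cubic polynomial
  set Q : F[X] := X ^ 3 - C (3 / 2) * X ^ 2 + C (9 / 16) * X - C (m₁ / 16) with hQdef
  have hQmonic : Q.Monic := by
    rw [hQdef]; monicity!
  have hQdeg : Q.natDegree = 3 := by
    rw [hQdef]; compute_degree!
  have h16K : (16 : K) ≠ 0 := by
    have h' : (2 : K) ^ 4 ≠ 0 := pow_ne_zero _ h2K
    norm_num at h'
    exact h'
  have haevalQ : aeval α Q = 0 := by
    rw [hQdef]
    simp only [map_add, map_sub, map_mul, map_pow, aeval_X, aeval_C]
    have e1 : algebraMap F K (3 / 2) = 3 / 2 := by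
      rw [map_div₀, map_ofNat, map_ofNat]
    have e2 : algebraMap F K (9 / 16) = 9 / 16 := by
      rw [map_div₀, map_ofNat, map_ofNat]
    have e3 : algebraMap F K (m₁ / 16) = (α * (4 * α - 3) ^ 2) / 16 := by
      rw [map_div₀, hm₁, map_ofNat]
    rw [e1, e2, e3]
    have hb : (16 : K) * 16⁻¹ = 1 := mul_inv_cancel₀ h16K
    have ha : (2 : K) * 2⁻¹ = 1 := mul_inv_cancel₀ h2K
    linear_combination (-α ^ 3 + 3 * 2⁻¹ * α ^ 2) * hb - 24 * 16⁻¹ * α ^ 2 * ha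
  have hhQ : h ∣ Q := by
    have hminp : minpoly F α = h := by
      rw [hαdef, AdjoinRoot.minpoly_root hmon.ne_zero, hmon.leadingCoeff, inv_one, map_one,
        mul_one]
    rw [← hminp]
    exact minpoly.dvd F α haevalQ
  have hdQ : h.natDegree ≤ 3 := by
    have := Polynomial.natDegree_le_of_dvd hhQ hQmonic.ne_zero
    omega
  have hd1 : h.natDegree ≠ 0 := by
    intro hc
    exact hirr.not_isUnit (hmon.natDegree_eq_zero.mp hc ▸ isUnit_one)
  -- exclude degrees 1 and 2
  have hdeg3 : h.natDegree = 3 := by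
    by_contra hne
    haveI : Module.Finite F K := Module.Finite.of_basis (AdjoinRoot.powerBasis hmon.ne_zero).basis
    haveI : Finite K := Module.finite_of_finite F
    haveI : Fintype K := Fintype.ofFinite K
    have hcardK : Fintype.card K = q ^ h.natDegree := by
      rw [Module.card_eq_pow_finrank (K := F) (V := K),
        (AdjoinRoot.powerBasis hmon.ne_zero).finrank, AdjoinRoot.powerBasis_dim]
    have hαcard : α ^ Fintype.card K = α := FiniteField.pow_card α
    have hαq2 : (α ^ q) ^ q = α := by
      rcases (by omega : h.natDegree = 1 ∨ h.natDegree = 2) with hd | hd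
      · have h1 : α ^ q = α := by
          rw [hd, pow_one] at hcardK
          rw [← hcardK]; exact hαcard
        rw [h1, h1]
      · rw [← pow_mul, ← pow_two, ← hd, ← hcardK]; exact hαcard
    -- move to algebraic closure and apply core lemma
    set L := AlgebraicClosure K with hLdef
    haveI : CharP L (ringChar F) :=
      charP_of_injective_algebraMap (algebraMap K L).injective (ringChar F)
    have hpowL : ∀ x y : L, (x + y) ^ q = x ^ q + y ^ q := by
      intro x y
      have h' := map_add (iterateFrobenius L (ringChar F) (f : ℕ)) x y
      rw [iterateFrobenius_def, iterateFrobenius_def, iterateFrobenius_def, ← hcard] at h'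
      exact h'
    have hsqL : ∀ x : L, ∃ y : L, y ^ 2 = x := fun x =>
      IsAlgClosed.exists_pow_nat_eq x (n := 2) (by norm_num : (0:ℕ) < 2)
    have h3L : (3 : L) ≠ 0 := by
      intro hc; apply h3K
      apply (algebraMap K L).injective
      rw [map_ofNat, map_zero]; exact hc
    set β : L := algebraMap K L α with hβdef
    set sL : L := algebraMap K L sK with hsLdef
    have hsfL : sL ^ q = sL := by
      rw [hsLdef, hsKdef, ← IsScalarTower.algebraMap_apply F K L, ← map_pow,
        FiniteField.pow_card]
    have hs1L : (2 * sL) ^ 2 = 1 := by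
      have := congrArg (algebraMap K L) hs1K
      rw [map_pow, map_mul, map_ofNat, map_one] at this
      rw [hsLdef]; exact this
    have hβqL : (β ^ q) ^ q = β := by
      rw [hβdef, ← map_pow, ← map_pow, hαq2]
    have heqL : β ^ n + (1 - β) ^ n = sL := by
      have := congrArg (algebraMap K L) hα
      rw [map_add, map_pow, map_pow, map_sub, map_one] at this
      rw [hβdef, hsLdef]; exact this
    exact core_no_quad q n h2n hq hpowL hsqL h3L sL β hsfL hs1L hβqL heqL
  -- conclude h = Q
  refine ⟨m₁ / 16, ?_⟩
  obtain ⟨c, hc⟩ := hhQ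
  have hc0 : c ≠ 0 := by
    intro hc'
    rw [hc', mul_zero] at hc
    exact hQmonic.ne_zero hc
  have hdegc : c.natDegree = 0 := by
    have := hQdeg
    rw [hc, Polynomial.natDegree_mul (hmon.ne_zero) hc0] at this
    omega
  have hcmonic : c.Monic := by
    have hl : Q.leadingCoeff = h.leadingCoeff * c.leadingCoeff := by
      rw [hc, Polynomial.leadingCoeff_mul]
    rw [hQmonic.leadingCoeff, hmon.leadingCoeff, one_mul] at hl
    exact hl.symm
  have hc1 : c = 1 := hcmonic.natDegree_eq_zero.mp hdegc
  rw [hc1, mul_one] at hc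
  rw [← hc, hQdef]
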